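/- Let P be a Łukasiewicz path and T = τ(P) the plane tree associated to P by the classical bijection. Then area(P) = rthorn(T). -/

import Mathlib

/-! ## Plane trees -/

/-- A plane tree: a root together with an ordered (left-to-right) list of subtrees.
A node is a *leaf* if it has no children, and *internal* otherwise. -/
inductive PTree : Type where
  | node : List PTree → PTree


namespace Luka

/-! ## Łukasiewicz paths

A path is encoded by its list of step increments: the step `(1,k)` (an up-step `U_k` of
degree `k`) is encoded by `k : ℤ` with `k ≥ 0`, and the down step `D = (1,-1)` by `-1`. -/

/-- `P` is a Łukasiewicz path: it is nonempty, uses steps `(1,k)` with `k ≥ -1`,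
stays (weakly) above the `x`-axis before its last step, and ends at height `-1`
(so that it goes strictly below the axis only at the last step, which is forced
to be the down-step `D`). -/
def IsLukas (P : List ℤ) : Prop :=
  P ≠ [] ∧ (∀ s ∈ P, -1 ≤ s) ∧ (∀ n, n < P.length → 0 ≤ (P.take n).sum) ∧ P.sum = -1

/-- The degrees of the up-steps of `P`, from left to right (the *profile* of `P`). -/
def upDegs (P : List ℤ) : List ℕ := (P.filter (fun s => 0 ≤ s)).map Int.toNat

/-- The profile multiset `𝔐(P)`: the multiset of degrees of the up-steps of `P`. -/
def profileM (P : List ℤ) : Multiset ℕ := (upDegs P : Multiset ℕ)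

/-- The degree of the first up-step of `P`, if any. -/
def firstUp? (P : List ℤ) : Option ℕ := (upDegs P).head?

/-- The degree of the last up-step of `P`, if any. -/
def lastUp? (P : List ℤ) : Option ℕ := (upDegs P).getLast?

/-- Auxiliary: starting from height `h`, record the starting height of every up-step. -/
def areaVecAux : ℤ → List ℤ → List ℤ
  | _, [] => []
  | h, s :: rest => (if 0 ≤ s then [h] else []) ++ areaVecAux (h + s) rest

/-- The area vector `Area(P)`: the `i`-th entry is the `y`-coordinate of the starting
point of the `i`-th up-step of `P`. -/
def areaVec (P : List ℤ) : List ℤ := areaVecAux 0 P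

/-- `area(P)`: the sum of the entries of the area vector (entries of a Łukasiewicz
path are nonnegative, so taking `Int.toNat` entrywise is harmless). -/
def area (P : List ℤ) : ℕ := ((areaVec P).map Int.toNat).sum

/-- Auxiliary computation of the depth values: `cur` is the depth value of the previous
step (`0` initially), and `stack` holds the pending depth values of the future matching
down-steps (top of the stack = value for the next matching down-step to come).
Reading an up-step `U_k` whose value is `cur` (inherited from the previous step) pushes
the values `cur+1, …, cur+k` for its `k` matching down-steps (its first matching
down-step, which crosses its topmost interior level, gets `cur+1`, etc.); reading a
down-step pops its value.  The list returned records the value `d_i` of each up-step,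
from left to right. -/
def depthVecAux : ℕ → List ℕ → List ℤ → List ℕ
  | _, _, [] => []
  | cur, stack, s :: rest =>
    if 0 ≤ s then
      cur :: depthVecAux cur ((List.range s.toNat).map (fun i => cur + i + 1) ++ stack) rest
    else
      match stack with
      | [] => depthVecAux cur [] rest
      | v :: st => depthVecAux v st rest

/-- The depth vector `Depth(P)`: the values `d_i` at the up-steps of `P`, left to right. -/
def depthVec (P : List ℤ) : List ℕ := depthVecAux 0 [] P

/-- `depth(P)`: the sum of the entries of the depth vector. -/
def depth (P : List ℤ) : ℕ := (depthVec P).sum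

/-- `P ∈ 𝓛_M`. -/
def MemL (M : Multiset ℕ) (P : List ℤ) : Prop := IsLukas P ∧ profileM P = M

/-- `P ∈ 𝓛_{a,M}`: first up-step of degree `a`, profile multiset `M ⊎ {a}`. -/
def MemLa (a : ℕ) (M : Multiset ℕ) (P : List ℤ) : Prop :=
  IsLukas P ∧ firstUp? P = some a ∧ profileM P = a ::ₘ M

/-- `P ∈ 𝓛_{M,b}`: last up-step of degree `b`, profile multiset `M ⊎ {b}`. -/
def MemLb (M : Multiset ℕ) (b : ℕ) (P : List ℤ) : Prop :=
  IsLukas P ∧ lastUp? P = some b ∧ profileM P = b ::ₘ M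

/-- `P ∈ 𝓛_{a,M,b}`: first up-step of degree `a`, last up-step of degree `b`,
profile multiset `M ⊎ {a, b}`. -/
def MemLab (a : ℕ) (M : Multiset ℕ) (b : ℕ) (P : List ℤ) : Prop :=
  IsLukas P ∧ firstUp? P = some a ∧ lastUp? P = some b ∧ profileM P = a ::ₘ b ::ₘ M

/-! ## Plane-tree statistics -/

/-- The (ordered) children of the root of a plane tree. -/
def children : PTree → List PTree
  | .node ts => ts

/-- The degree of (the root of) a plane tree: its number of children. -/
def numChildren (t : PTree) : ℕ := (children t).length

mutual
/-- Number of internal nodes of a plane tree. -/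
def internCount : PTree → ℕ
  | .node [] => 0
  | .node (t :: ts) => 1 + internCountL (t :: ts)
def internCountL : List PTree → ℕ
  | [] => 0
  | t :: ts => internCount t + internCountL ts
end

mutual
/-- `lthornT T` = the sum of `lthorn(u)` over all internal nodes `u` of `T`, where
`lthorn(u)` is the number of descending edges of strict ancestors `v` of `u` lying to
the left of the path from `v` to `u`.  (Every internal node of the subtree rooted at
the `i`-th child (0-indexed) of a node gains `i` left thorns from that node.) -/
def lthornT : PTree → ℕ
  | .node ts => lthornL 0 ts
def lthornL : ℕ → List PTree → ℕ
  | _, [] => 0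
  | i, t :: ts => lthornT t + i * internCount t + lthornL (i + 1) ts
end

mutual
/-- `rthornT T` = the sum of `rthorn(u)` over all internal nodes `u` of `T`, where
`rthorn(u)` is the number of descending edges of strict ancestors `v` of `u` lying to
the right of the path from `v` to `u`. -/
def rthornT : PTree → ℕ
  | .node ts => rthornL ts
def rthornL : List PTree → ℕ
  | [] => 0
  | t :: ts => rthornT t + ts.length * internCount t + rthornL ts
end

mutual
/-- The list of the values `lthorn(u)` for the internal nodes `u` of `T`, in
contour-walk (preorder) order. -/
def lthornList : PTree → List ℕ
  | .node [] => []
  | .node (t :: ts) => 0 :: lthornLL 0 (t :: ts)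
def lthornLL : ℕ → List PTree → List ℕ
  | _, [] => []
  | i, t :: ts => (lthornList t).map (· + i) ++ lthornLL (i + 1) ts
end

mutual
/-- The list of the values `rthorn(u)` for the internal nodes `u` of `T`, in
contour-walk (preorder) order. -/
def rthornList : PTree → List ℕ
  | .node [] => []
  | .node (t :: ts) => 0 :: rthornLL (t :: ts)
def rthornLL : List PTree → List ℕ
  | [] => []
  | t :: ts => (rthornList t).map (· + ts.length) ++ rthornLL ts
end

/-! ## The bijections `λ` and `τ` -/

mutual
/-- `λ`: record each node of the tree at its first visit in the left-to-right contour
walk: `U_k` (i.e. `k`) for an internal node with `k+1` children, `D` (i.e. `-1`)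
for a leaf. -/
def lambdaT : PTree → List ℤ
  | .node ts => ((ts.length : ℤ) - 1) :: lambdaL ts
def lambdaL : List PTree → List ℤ
  | [] => []
  | t :: ts => lambdaT t ++ lambdaL ts
end

/-- Auxiliary for `τ`: reading the path from right to left, maintain the stack of the
already-built subtrees (in left-to-right order); a down-step `D` creates a leaf and an
up-step `U_k` grabs the `k+1` topmost subtrees as its children.  This builds the same
tree as the left-to-right "leftmost bud" construction. -/
def tauStack (P : List ℤ) : List PTree :=
  P.foldr (fun s st =>
    if s < 0 then PTree.node [] :: st
    else PTree.node (st.take (s.toNat + 1)) :: st.drop (s.toNat + 1)) []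

/-- `τ`: the plane tree associated with a Łukasiewicz path. -/
def tau (P : List ℤ) : PTree := (tauStack P).headD (.node [])

mutual
/-- The mirror of a plane tree: reverse the left-to-right order of the children of
every internal node. -/
def mir : PTree → PTree
  | .node ts => .node (mirL ts).reverse
def mirL : List PTree → List PTree
  | [] => []
  | t :: ts => mir t :: mirL ts
end

mutual
/-- The subtrees rooted at the internal nodes of `T`, in contour-walk (preorder)
order. -/
def internalSubtrees : PTree → List PTree
  | .node [] => []
  | .node (t :: ts) => .node (t :: ts) :: internalSubtreesL (t :: ts)
def internalSubtreesL : List PTree → List PTree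
  | [] => []
  | t :: ts => internalSubtrees t ++ internalSubtreesL ts
end

/-- The multiset of degrees of the non-root internal nodes of `T`. -/
def nonRootInternalDegs (T : PTree) : Multiset ℕ :=
  (((internalSubtreesL (children T)).map numChildren : List ℕ) : Multiset ℕ)

/-! ## Lodestars and the lodestar swap -/

/-- A node is a lodestar-type node if it is internal and all its children are leaves. -/
def isLodestarNode (t : PTree) : Bool :=
  !(children t).isEmpty && (children t).all (fun c => (children c).isEmpty)

mutual
/-- The subtree rooted at the *left lodestar* of `T`: the first internal node, in
contour-walk (preorder) order, all of whose children are leaves (if it exists). -/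
def leftLode? : PTree → Option PTree
  | .node ts =>
    if isLodestarNode (.node ts) then some (.node ts) else leftLodeL? ts
def leftLodeL? : List PTree → Option PTree
  | [] => none
  | t :: ts =>
    match leftLode? t with
    | some r => some r
    | none => leftLodeL? ts
end

mutual
/-- The subtree rooted at the *right lodestar* of `T`: the last internal node, in
contour-walk (preorder) order, all of whose children are leaves (if it exists). -/
def rightLode? : PTree → Option PTree
  | .node ts =>
    match rightLodeL? ts with
    | some r => some r
    | none => if isLodestarNode (.node ts) then some (.node ts) else none
def rightLodeL? : List PTree → Option PTree
  | [] => none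
  | t :: ts =>
    match rightLodeL? ts with
    | some r => some r
    | none => rightLode? t
end

mutual
/-- Replace the left lodestar of `T` (first preorder all-leaf-children internal node)
by the tree `r`; `none` if `T` has no internal node. -/
def replF : PTree → PTree → Option PTree
  | r, .node ts =>
    if isLodestarNode (.node ts) then some r
    else (replFL r ts).map PTree.node
def replFL : PTree → List PTree → Option (List PTree)
  | _, [] => none
  | r, t :: ts =>
    match replF r t with
    | some t' => some (t' :: ts)
    | none => (replFL r ts).map (t :: ·)
end

mutual
/-- Replace the right lodestar of `T` (last preorder all-leaf-children internal node)
by the tree `r`; `none` if `T` has no internal node. -/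
def replL : PTree → PTree → Option PTree
  | r, .node ts =>
    match replLL r ts with
    | some ts' => some (.node ts')
    | none => if isLodestarNode (.node ts) then some r else none
def replLL : PTree → List PTree → Option (List PTree)
  | _, [] => none
  | r, t :: ts =>
    match replLL r ts with
    | some ts' => some (t :: ts')
    | none => (replL r t).map (· :: ts)
end

/-- The lodestar swap: exchange the subtrees rooted at the left lodestar and the
right lodestar of `T` (each a node together with its pendant leaves). -/
def lodeSwap (T : PTree) : PTree :=
  match leftLode? T, rightLode? T with
  | some L, some R => ((replF R T).bind (replL L)).getD T
  | _, _ => T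

/-! ### Auxiliary lemmas for Proposition 3.3 -/

theorem areaVecAux_append (h : ℤ) (A B : List ℤ) :
    areaVecAux h (A ++ B) = areaVecAux h A ++ areaVecAux (h + A.sum) B := by
  induction A generalizing h with
  | nil => simp [areaVecAux]
  | cons s A ih =>
    simp only [List.cons_append, areaVecAux, List.sum_cons, List.append_assoc]
    rw [ih, add_assoc]

theorem lambdaL_append (A B : List PTree) :
    lambdaL (A ++ B) = lambdaL A ++ lambdaL B := by
  induction A with
  | nil => simp [lambdaL]
  | cons t A ih => simp [lambdaL, ih]

mutual
theorem lambdaT_sum : ∀ t : PTree, (lambdaT t).sum = -1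
  | .node ts => by simp [lambdaT, lambdaL_sum ts]; ring
theorem lambdaL_sum : ∀ ts : List PTree, (lambdaL ts).sum = -(ts.length : ℤ)
  | [] => by simp [lambdaL]
  | t :: ts => by
    simp [lambdaL, lambdaT_sum t, lambdaL_sum ts]
end

mutual
theorem areaSumT : ∀ (t : PTree) (h : ℤ),
    (areaVecAux h (lambdaT t)).sum = h * internCount t + rthornT t
  | .node [], h => by
    simp [lambdaT, lambdaL, areaVecAux, internCount, children, rthornT, rthornL]
  | .node (t :: ts), h => by
    have hL := areaSumL (t :: ts) (h + ts.length)
    simp only [lambdaT, areaVecAux, List.length_cons] at *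
    rw [if_pos (by push_cast; omega)]
    simp only [List.singleton_append, List.sum_cons]
    push_cast
    rw [show h + ((ts.length : ℤ) + 1 - 1) = h + ts.length by ring, hL]
    simp only [internCount, children, rthornT, List.length_cons]
    push_cast
    ring
theorem areaSumL : ∀ (ts : List PTree) (g : ℤ),
    (areaVecAux g (lambdaL ts)).sum
      = (g - ts.length + 1) * internCountL ts + rthornL ts
  | [], g => by simp [lambdaL, areaVecAux, internCountL, rthornL]
  | t :: ts, g => by
    have h1 := areaSumT t g
    have h2 := areaSumL ts (g - 1)
    simp only [lambdaL, areaVecAux_append, List.sum_append, lambdaT_sum t]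
    have harg : g + (-1 : ℤ) = g - 1 := by ring
    rw [harg, h1, h2]
    simp only [internCountL, rthornL, List.length_cons]
    push_cast
    ring
end

mutual
theorem areaNonnegT : ∀ (t : PTree) (h : ℤ), 0 ≤ h →
    ∀ x ∈ areaVecAux h (lambdaT t), 0 ≤ x
  | .node [], h, hh => by
    simp [lambdaT, lambdaL, areaVecAux]
  | .node (t :: ts), h, hh => by
    intro x hx
    simp only [lambdaT, areaVecAux, List.length_cons] at hx
    rw [if_pos (by push_cast; omega)] at hx
    simp only [List.singleton_append, List.mem_cons] at hx
    rcases hx with rfl | hx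
    · exact hh
    · exact areaNonnegL (t :: ts) _
        (by simp only [List.length_cons]; push_cast; omega) x hx
theorem areaNonnegL : ∀ (ts : List PTree) (g : ℤ), (ts.length : ℤ) ≤ g + 1 →
    ∀ x ∈ areaVecAux g (lambdaL ts), 0 ≤ x
  | [], g, hg => by simp [lambdaL, areaVecAux]
  | t :: ts, g, hg => by
    intro x hx
    simp only [lambdaL, areaVecAux_append, lambdaT_sum t, List.mem_append] at hx
    have hlen : (ts.length : ℤ) ≥ 0 := by positivity
    simp only [List.length_cons] at hg
    push_cast at hg
    rcases hx with hx | hx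
    · exact areaNonnegT t g (by omega) x hx
    · exact areaNonnegL ts (g + -1) (by omega) x hx
end

theorem toNat_sum_eq (l : List ℤ) (hl : ∀ x ∈ l, 0 ≤ x) :
    ((l.map Int.toNat).sum : ℤ) = l.sum := by
  induction l with
  | nil => simp
  | cons a l ih =>
    simp only [List.map_cons, List.sum_cons, Nat.cast_add]
    rw [Int.toNat_of_nonneg (hl a (by simp)), ih (fun x hx => hl x (by simp [hx]))]

theorem tauStack_spec : ∀ (Q : List ℤ), (∀ s ∈ Q, -1 ≤ s) →
    (∀ n, n < Q.length → (Q.drop n).sum ≤ -1) →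
    ((tauStack Q).length : ℤ) = -Q.sum ∧ lambdaL (tauStack Q) = Q := by
  intro Q
  induction Q with
  | nil => intro _ _; simp [tauStack, lambdaL]
  | cons s Q ih =>
    intro hs hsuf
    have h0 : s + Q.sum ≤ -1 := by
      have := hsuf 0 (by simp)
      simpa using this
    obtain ⟨hlen, hlam⟩ := ih (fun x hx => hs x (by simp [hx]))
      (fun n hn => by
        have := hsuf (n + 1) (by simpa using Nat.succ_lt_succ hn)
        simpa using this)
    have hstep : tauStack (s :: Q) =
        (if s < 0 then PTree.node [] :: tauStack Q
         else PTree.node ((tauStack Q).take (s.toNat + 1))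
           :: (tauStack Q).drop (s.toNat + 1)) := by
      simp [tauStack]
    by_cases hneg : s < 0
    · have hs1 : s = -1 := by have := hs s (by simp); omega
      rw [hstep, if_pos hneg]
      constructor
      · simp only [List.length_cons, List.sum_cons]
        push_cast
        omega
      · simp only [lambdaL, lambdaT, hlam, hs1]
        simp [lambdaL]
    · push_neg at hneg
      have hge : s.toNat + 1 ≤ (tauStack Q).length := by omega
      rw [hstep, if_neg (by omega)]
      have htk : ((tauStack Q).take (s.toNat + 1)).length = s.toNat + 1 := by
        simp [List.length_take]; omega
      constructor
      · simp only [List.length_cons, List.length_drop, List.sum_cons]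
        push_cast
        omega
      · simp only [lambdaL, lambdaT, htk]
        rw [List.cons_append, ← lambdaL_append, List.take_append_drop, hlam]
        congr 1
        push_cast
        omega

end Luka

open Luka in
/-- **Proposition 3.3.**  Let `P` be a Łukasiewicz path and `T = τ(P)` the plane tree
associated to `P` by the classical bijection.  Then `area(P) = rthorn(T)`. -/
theorem area_eq_rthorn_tau (P : List ℤ) (hP : IsLukas P) :
    area P = rthornT (tau P) := by
  obtain ⟨hne, hstep, hpre, hsum⟩ := hP
  have hsuf : ∀ n, n < P.length → (P.drop n).sum ≤ -1 := by
    intro n hn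
    have h1 : (P.take n).sum + (P.drop n).sum = P.sum := by
      rw [← List.sum_append, List.take_append_drop]
    have h2 := hpre n hn
    omega
  obtain ⟨hlen, hlam⟩ := tauStack_spec P hstep hsuf
  rw [hsum] at hlen
  have hlen1 : (tauStack P).length = 1 := by omega
  obtain ⟨T, hT⟩ := List.length_eq_one_iff.mp hlen1
  have htau : tau P = T := by simp [tau, hT]
  have hlamT : lambdaT T = P := by
    rw [hT] at hlam
    simpa [lambdaL] using hlam
  have hnn : ∀ x ∈ areaVec P, 0 ≤ x := by
    rw [areaVec, ← hlamT]
    exact areaNonnegT T 0 le_rfl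
  have hcast : ((area P : ℤ)) = (rthornT T : ℤ) := by
    rw [area, toNat_sum_eq _ hnn, areaVec, ← hlamT, areaSumT T 0]
    ring
  rw [htau]
  exact_mod_cast hcast
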